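/- arXiv:1805.06724 — 4 statements merged into one kernel-verified Lean document; each statement's English description precedes it below -/
import Mathlib

section
/- Suppose (x*, y*) is an equilibrium of the broadcast max-consensus dynamics on a connected graph with at least two nodes, where x* = c·1 is constant. Then y* must equal the all-ones vector: if y*_i = 0 for some i, the equilibrium conditions are violated. -/
/-- If `(x*, y*)` with `x* = c·1` constant is an equilibrium of the broadcast
max-consensus dynamics on a connected graph with at least two nodes, then the
authorization vector `y*` must be all ones. -/
theorem stmt_8 {ι : Type*} [Fintype ι] [DecidableEq ι]
    (G : SimpleGraph ι) [DecidableRel G.Adj]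
    (hconn : G.Connected) (hcard : 2 ≤ Fintype.card ι)
    (c : ℝ) (hc : 0 ≤ c)
    (x : ι → ℝ) (y : ι → Bool) (u : ι → ℝ)
    (hx : ∀ i, x i = c)
    (hu : ∀ i, u i =
      if h : ((G.neighborFinset i).filter (fun j => y j = true)).Nonempty then
        (∑ j ∈ (G.neighborFinset i).filter (fun j => y j = true), x j) /
          (((G.neighborFinset i).filter (fun j => y j = true)).card : ℝ)
      else 0)
    (heq1 : ∀ i, x i = max (x i) (u i))
    (heq2 : ∀ i, y i = decide (u i ≤ x i)) :
    ∀ i, y i = true := by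
  intro i
  have hui : u i ≤ c := by
    rw [hu i]
    split
    · next h =>
      have hne : (((G.neighborFinset i).filter (fun j => y j = true)).card : ℝ) ≠ 0 := by
        exact_mod_cast Finset.card_ne_zero_of_mem h.choose_spec
      have : (∑ j ∈ (G.neighborFinset i).filter (fun j => y j = true), x j)
          = (((G.neighborFinset i).filter (fun j => y j = true)).card : ℝ) * c := by
        rw [Finset.sum_congr rfl (fun j _ => hx j), Finset.sum_const, nsmul_eq_mul]
      rw [this, mul_div_cancel_left₀ _ hne]
    · exact hc
  rw [heq2 i, decide_eq_true_eq, hx i]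
  exact hui
end

section
/- Suppose (x*, 1) is an equilibrium of the broadcast max-consensus dynamics on a connected graph with at least two nodes, where the authorization vector is all ones. Then x* must be a constant vector: all components of x* are equal. -/
/-- If `(x*, 1)` is an equilibrium of the broadcast max-consensus dynamics on a
connected graph with at least two nodes (so every agent's state dominates the
average of its neighbors' states), then `x*` is a constant vector. -/
theorem stmt_9 {ι : Type*} [Fintype ι] [DecidableEq ι]
    (G : SimpleGraph ι) [DecidableRel G.Adj]
    (hconn : G.Connected) (hcard : 2 ≤ Fintype.card ι)
    (x u : ι → ℝ)
    (hu : ∀ i, u i = (∑ j ∈ G.neighborFinset i, x j) / ((G.neighborFinset i).card : ℝ))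
    (heq : ∀ i, u i ≤ x i) :
    ∀ i j, x i = x j := by
  have : Nonempty ι := Fintype.card_pos_iff.mp (by omega)
  obtain ⟨m, -, hm⟩ := Finset.exists_min_image Finset.univ x ⟨Classical.arbitrary ι, Finset.mem_univ _⟩
  have hmin : ∀ k, x m ≤ x k := fun k => hm k (Finset.mem_univ k)
  -- step lemma
  have step : ∀ a b, G.Adj a b → x a = x m → x b = x m := by
    intro a b hab ha
    by_contra hne
    have hb : x m < x b := lt_of_le_of_ne (hmin b) (Ne.symm hne)
    have hbmem : b ∈ G.neighborFinset a := by
      simp [SimpleGraph.mem_neighborFinset, hab]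
    have hcardpos : 0 < (G.neighborFinset a).card := Finset.card_pos.mpr ⟨b, hbmem⟩
    have hsum : ((G.neighborFinset a).card : ℝ) * x m < ∑ j ∈ G.neighborFinset a, x j := by
      have := Finset.sum_lt_sum (f := fun _ : ι => x m) (g := x)
        (s := G.neighborFinset a)
        (fun k _ => hmin k) ⟨b, hbmem, hb⟩
      simpa using this
    have hua : x a < u a := by
      rw [hu a, ha, lt_div_iff₀ (by exact_mod_cast hcardpos)]
      linarith [hsum]
    exact absurd (heq a) (not_le.mpr hua)
  have walkstep : ∀ a b, G.Walk a b → x a = x m → x b = x m := by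
    intro a b w
    induction w with
    | nil => exact id
    | cons h p ih => intro ha; exact ih (step _ _ h ha)
  have hall : ∀ k, x k = x m := fun k =>
    walkstep m k ((hconn.preconnected m k).some) rfl
  intro i j
  rw [hall i, hall j]
end

section
/- For the broadcast max-consensus dynamics on a connected graph with at least two nodes, if ∑_{i∈N} (x_i(k+2) − x_i(k)) = 0 for some k, then x(k) is the constant vector c·1 with c = max of initial states. -/
/-- Contraction property: for the broadcast max-consensus dynamics on a connected
graph with at least two nodes, if `∑_i (x_i(k+2) - x_i(k)) = 0` at some time
`k ≥ 1`, then `x(k)` is the consensus vector `c·1` with `c` the initial maximum. -/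
theorem stmt_11 {ι : Type*} [Fintype ι] [Nonempty ι] [DecidableEq ι]
    (G : SimpleGraph ι) [DecidableRel G.Adj]
    (hconn : G.Connected) (hcard : 2 ≤ Fintype.card ι)
    (x : ι → ℕ → ℝ) (y : ι → ℕ → Bool) (u : ι → ℕ → ℝ)
    (hx1 : ∀ i, 0 ≤ x i 1) (hy1 : ∀ i, y i 1 = true)
    (hu : ∀ i k, u i k =
      if h : ((G.neighborFinset i).filter (fun j => y j k = true)).Nonempty then
        (∑ j ∈ (G.neighborFinset i).filter (fun j => y j k = true), x j k) /
          (((G.neighborFinset i).filter (fun j => y j k = true)).card : ℝ)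
      else 0)
    (hxdyn : ∀ i k, x i (k + 1) = max (x i k) (u i k))
    (hydyn : ∀ i k, y i (k + 1) = decide (u i k ≤ x i k))
    (k : ℕ) (hk : 1 ≤ k)
    (hsum : ∑ i, (x i (k + 2) - x i k) = 0) :
    ∀ i, x i k = Finset.univ.sup' Finset.univ_nonempty (fun j => x j 1) := by
  -- monotonicity of each x i
  have mono : ∀ i a b, a ≤ b → x i a ≤ x i b := by
    intro i a b hab
    induction b with
    | zero => interval_cases a; exact le_rfl
    | succ n ih =>
      rcases Nat.lt_or_ge a (n + 1) with h | h
      · exact (ih (Nat.lt_succ_iff.mp h)).trans (by rw [hxdyn]; exact le_max_left _ _)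
      · have : a = n + 1 := le_antisymm hab h
        rw [this]
  -- each summand is zero
  have hpt : ∀ i, x i (k + 2) - x i k = 0 := by
    intro i
    have h := (Finset.sum_eq_zero_iff_of_nonneg ?_).mp hsum i (Finset.mem_univ i)
    · exact h
    · intro j _
      have := mono j k (k + 2) (by omega)
      linarith
  have heq2 : ∀ i, x i (k + 2) = x i k := fun i => by have := hpt i; linarith
  have heq1 : ∀ i, x i (k + 1) = x i k :=
    fun i => le_antisymm (by rw [← heq2 i]; exact mono i (k + 1) (k + 2) (by omega))
      (mono i k (k + 1) (by omega))
  have heq12 : ∀ i, x i (k + 2) = x i (k + 1) := fun i => by rw [heq2 i, heq1 i]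
  -- u ≤ x at times k and k+1
  have hu_le : ∀ i, u i k ≤ x i k := by
    intro i
    have h := hxdyn i k
    rw [heq1 i] at h
    exact max_eq_left_iff.mp h.symm
  have hu_le1 : ∀ i, u i (k + 1) ≤ x i (k + 1) := by
    intro i
    have h := hxdyn i (k + 1)
    rw [heq12 i] at h
    exact max_eq_left_iff.mp h.symm
  -- all y true at k+1
  have hy : ∀ i, y i (k + 1) = true := by
    intro i
    rw [hydyn]
    simp [hu_le i]
  -- every vertex has a neighbor
  have hnb : ∀ i, (G.neighborFinset i).Nonempty := by
    intro i
    obtain ⟨j, hj⟩ := Fintype.exists_ne_of_one_lt_card (by omega) i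
    obtain ⟨w⟩ := hconn i j
    cases w with
    | nil => exact absurd rfl (Ne.symm hj)
    | cons h p => exact ⟨_, (SimpleGraph.mem_neighborFinset _ _ _).mpr h⟩
  -- u at k+1 is the full-neighbor average
  have hfilter : ∀ i, (G.neighborFinset i).filter (fun j => y j (k + 1) = true)
      = G.neighborFinset i := by
    intro i
    apply Finset.filter_true_of_mem
    intro j _
    exact hy j
  have hu1 : ∀ i, u i (k + 1)
      = (∑ j ∈ G.neighborFinset i, x j (k + 1)) / ((G.neighborFinset i).card : ℝ) := by
    intro i
    rw [hu, hfilter i, dif_pos (hnb i)]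
  -- the minimum value at time k+1
  obtain ⟨m, -, hm⟩ := Finset.exists_min_image Finset.univ (fun i => x i (k + 1))
    Finset.univ_nonempty
  have hmin : ∀ j, x m (k + 1) ≤ x j (k + 1) := fun j => hm j (Finset.mem_univ j)
  -- adjacency closure of the min set
  have hstep : ∀ i, x i (k + 1) = x m (k + 1) → ∀ j, G.Adj i j → x j (k + 1) = x m (k + 1) := by
    intro i hi j hij
    have hcard : (0 : ℝ) < ((G.neighborFinset i).card : ℝ) := by
      exact_mod_cast Finset.card_pos.mpr (hnb i)
    have hle := hu_le1 i
    rw [hu1 i, hi, div_le_iff₀ hcard] at hle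
    have hsum_ge : ∑ _j ∈ G.neighborFinset i, x m (k + 1)
        ≤ ∑ j ∈ G.neighborFinset i, x j (k + 1) :=
      Finset.sum_le_sum (fun j _ => hmin j)
    have hconst : ∑ _j ∈ G.neighborFinset i, x m (k + 1)
        = x m (k + 1) * ((G.neighborFinset i).card : ℝ) := by
      rw [Finset.sum_const, nsmul_eq_mul]; ring
    have heqsum : ∑ j ∈ G.neighborFinset i, x j (k + 1)
        = ∑ _j ∈ G.neighborFinset i, x m (k + 1) := by
      rw [hconst]; linarith
    have := (Finset.sum_eq_sum_iff_of_le (fun j _ => hmin j)).mp heqsum.symm j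
      ((SimpleGraph.mem_neighborFinset _ _ _).mpr hij)
    exact this.symm
  -- propagate along walks: everything equals the min at time k+1
  have key : ∀ a b : ι, G.Walk a b → x a (k + 1) = x m (k + 1) → x b (k + 1) = x m (k + 1) := by
    intro a b w
    induction w with
    | nil => exact id
    | cons h p ih => intro ha; exact ih (hstep _ ha _ h)
  have hall : ∀ j, x j (k + 1) = x m (k + 1) := fun j => (hconn m j).elim fun w => key m j w rfl
  -- upper bound by the initial max
  have hxB1 : ∀ i, x i 1 ≤ Finset.univ.sup' Finset.univ_nonempty (fun j => x j 1) :=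
    fun i => Finset.le_sup' (fun j => x j 1) (Finset.mem_univ i)
  have hB0 : (0 : ℝ) ≤ Finset.univ.sup' Finset.univ_nonempty (fun j => x j 1) :=
    (hx1 (Classical.arbitrary ι)).trans (hxB1 _)
  have hbound : ∀ t, 1 ≤ t → ∀ i, x i t ≤ Finset.univ.sup' Finset.univ_nonempty
      (fun j => x j 1) := by
    intro t ht
    induction t, ht using Nat.le_induction with
    | base => exact hxB1
    | succ n hn ih =>
      intro i
      rw [hxdyn, max_le_iff]
      refine ⟨ih i, ?_⟩
      rw [hu]
      split_ifs with h
      · have hcard : (0 : ℝ)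
            < (((G.neighborFinset i).filter (fun j => y j n = true)).card : ℝ) := by
          exact_mod_cast Finset.card_pos.mpr h
        rw [div_le_iff₀ hcard]
        calc ∑ j ∈ (G.neighborFinset i).filter (fun j => y j n = true), x j n
            ≤ ∑ _j ∈ (G.neighborFinset i).filter (fun j => y j n = true),
              Finset.univ.sup' Finset.univ_nonempty (fun j => x j 1) :=
              Finset.sum_le_sum (fun j _ => ih j)
          _ = Finset.univ.sup' Finset.univ_nonempty (fun j => x j 1)
              * (((G.neighborFinset i).filter (fun j => y j n = true)).card : ℝ) := by
              rw [Finset.sum_const, nsmul_eq_mul]; ring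
      · exact hB0
  -- conclusion
  intro i
  refine le_antisymm (hbound k hk i) ?_
  rw [← heq1 i]
  apply Finset.sup'_le
  intro j _
  calc x j 1 ≤ x j (k + 1) := mono j 1 (k + 1) (by omega)
    _ = x m (k + 1) := hall j
    _ = x i (k + 1) := (hall i).symm
end

section
/- Let V(k) = 2n·c − ∑_{i∈N} (x_i(k) + x_i(k−1)), where c = max_j x_j(1), for the broadcast max-consensus dynamics on a connected graph with at least two nodes. Then V is nonnegative along all trajectories, V(k) = 0 if and only if x(k) = x(k−1) = c·1, and V is strictly decreasing along trajectories whenever x(k−1) ≠ c·1 or x(k) ≠ c·1. -/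
/-- Lyapunov function for the broadcast max-consensus dynamics:
`V(k) = 2n·c − ∑_i (x_i(k) + x_i(k−1))` with `c` the initial maximum is
nonnegative along trajectories, vanishes exactly at consensus
(`x(k) = x(k−1) = c·1`), and strictly decreases whenever
`x(k−1) ≠ c·1` or `x(k) ≠ c·1`. -/
theorem stmt_17 {ι : Type*} [Fintype ι] [Nonempty ι] [DecidableEq ι]
    (G : SimpleGraph ι) [DecidableRel G.Adj]
    (hconn : G.Connected) (hcard : 2 ≤ Fintype.card ι)
    (x : ι → ℕ → ℝ) (y : ι → ℕ → Bool) (u : ι → ℕ → ℝ)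
    (hx1 : ∀ i, 0 ≤ x i 1) (hy1 : ∀ i, y i 1 = true)
    (hu : ∀ i k, u i k =
      if h : ((G.neighborFinset i).filter (fun j => y j k = true)).Nonempty then
        (∑ j ∈ (G.neighborFinset i).filter (fun j => y j k = true), x j k) /
          (((G.neighborFinset i).filter (fun j => y j k = true)).card : ℝ)
      else 0)
    (hxdyn : ∀ i k, x i (k + 1) = max (x i k) (u i k))
    (hydyn : ∀ i k, y i (k + 1) = decide (u i k ≤ x i k))
    (c : ℝ) (hc : c = Finset.univ.sup' Finset.univ_nonempty (fun j => x j 1))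
    (V : ℕ → ℝ)
    (hV : ∀ k, V k = 2 * (Fintype.card ι : ℝ) * c - ∑ i, (x i k + x i (k - 1))) :
    ∀ k, 2 ≤ k →
      (0 ≤ V k) ∧
      (V k = 0 ↔ ∀ i, x i k = c ∧ x i (k - 1) = c) ∧
      (((¬ ∀ i, x i (k - 1) = c) ∨ (¬ ∀ i, x i k = c)) → V (k + 1) < V k) := by
  have hcnn : 0 ≤ c := by
    obtain ⟨j⟩ := (inferInstance : Nonempty ι)
    rw [hc]; exact le_trans (hx1 j) (Finset.le_sup' (fun j => x j 1) (Finset.mem_univ j))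
  have hmono : ∀ i k, x i k ≤ x i (k + 1) := fun i k => (hxdyn i k) ▸ le_max_left _ _
  have hmono' : ∀ i, Monotone (x i) := fun i => monotone_nat_of_le_succ (hmono i)
  have hub : ∀ k, 1 ≤ k → ∀ i, x i k ≤ c := by
    intro k
    induction k with
    | zero => omega
    | succ n ih =>
      intro _
      rcases Nat.lt_or_ge n 1 with h1 | h1
      · interval_cases n
        · intro i; rw [hc]; exact Finset.le_sup' (fun j => x j 1) (Finset.mem_univ i)
      · intro i
        rw [hxdyn]
        refine max_le (ih h1 i) ?_
        rw [hu]
        split_ifs with h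
        · have hpos : (0:ℝ) < ((G.neighborFinset i).filter (fun j => y j n = true)).card := by
            exact_mod_cast Finset.card_pos.mpr h
          rw [div_le_iff₀ hpos]
          calc (∑ j ∈ (G.neighborFinset i).filter (fun j => y j n = true), x j n)
              ≤ ((G.neighborFinset i).filter (fun j => y j n = true)).card • c :=
                Finset.sum_le_card_nsmul _ _ _ (fun j _ => ih h1 j)
            _ = c * ((G.neighborFinset i).filter (fun j => y j n = true)).card := by
                rw [nsmul_eq_mul]; ring
        · exact hcnn
  obtain ⟨j₀, -, hj₀⟩ := Finset.exists_mem_eq_sup' (Finset.univ_nonempty (α := ι)) (fun j => x j 1)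
  have hj₀c : ∀ k, 1 ≤ k → x j₀ k = c :=
    fun k hk => le_antisymm (hub k hk j₀) (by rw [hc, hj₀]; exact hmono' j₀ hk)
  intro k hk
  have hk1 : k - 1 + 1 = k := by omega
  have hVk : V k = ∑ i, (2 * c - (x i k + x i (k - 1))) := by
    rw [hV, Finset.sum_sub_distrib, Finset.sum_const, Finset.card_univ, nsmul_eq_mul]
    ring
  have hterm : ∀ i ∈ Finset.univ (α := ι), 0 ≤ 2 * c - (x i k + x i (k - 1)) := by
    intro i _
    have h1 := hub k (by omega) i
    have h2 := hub (k - 1) (by omega) i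
    linarith
  refine ⟨?_, ?_, ?_⟩
  · rw [hVk]; exact Finset.sum_nonneg hterm
  · rw [hVk, Finset.sum_eq_zero_iff_of_nonneg hterm]
    constructor
    · intro h i
      have h0 := h i (Finset.mem_univ i)
      have h1 := hub k (by omega) i
      have h2 := hub (k - 1) (by omega) i
      constructor <;> linarith
    · intro h i _
      obtain ⟨h1, h2⟩ := h i
      rw [h1, h2]; ring
  · intro hne
    have hle : ∀ i, x i (k - 1) ≤ x i k := fun i => by
      have := hmono' i (show k - 1 ≤ k by omega); exact this
    have hne' : ¬ ∀ i, x i (k - 1) = c := by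
      rcases hne with h | h
      · exact h
      · intro hall
        exact h fun i => le_antisymm (hub k (by omega) i) (hall i ▸ hle i)
    have goal' : (∑ i, x i (k - 1)) < ∑ i, x i (k + 1) → V (k + 1) < V k := by
      intro h
      rw [hV, hV]
      have e1 : k + 1 - 1 = k := by omega
      rw [e1, Finset.sum_add_distrib, Finset.sum_add_distrib]
      linarith
    apply goal'
    by_cases heq : ∀ i, x i k = x i (k - 1)
    · -- all nodes authorized at time k
      have hy : ∀ i, y i k = true := by
        intro i
        have h1 := hxdyn i (k - 1)
        rw [hk1] at h1
        have hule : u i (k - 1) ≤ x i (k - 1) := by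
          have h2 : u i (k - 1) ≤ x i k := h1 ▸ le_max_right _ _
          rw [heq i] at h2; exact h2
        have h3 := hydyn i (k - 1)
        rw [hk1] at h3
        rw [h3]; simpa using hule
      -- minimum value
      set m := Finset.univ.inf' Finset.univ_nonempty (fun i => x i k) with hm
      have hminle : ∀ i, m ≤ x i k := fun i => Finset.inf'_le _ (Finset.mem_univ i)
      obtain ⟨imin, -, himin⟩ :=
        Finset.exists_mem_eq_inf' (Finset.univ_nonempty (α := ι)) (fun i => x i k)
      obtain ⟨i₀, hi₀⟩ := not_forall.mp hne'
      have hi₀k : x i₀ k < c := by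
        have := hub k (by omega) i₀
        rcases lt_or_eq_of_le this with h | h
        · exact h
        · exact absurd ((heq i₀).symm.trans h) hi₀
      have hmc : m < c := lt_of_le_of_lt (hminle i₀) hi₀k
      have hj₀k : x j₀ k = c := hj₀c k (by omega)
      -- boundary dart
      set S : Set ι := {i | x i k = m} with hS
      have hiS : imin ∈ S := himin.symm
      have hjS : j₀ ∉ S := by simp only [hS, Set.mem_setOf_eq, hj₀k]; exact fun h => absurd h (ne_of_gt hmc)
      obtain ⟨p⟩ := hconn.preconnected imin j₀
      obtain ⟨d, -, hd1, hd2⟩ := p.exists_boundary_dart S hiS hjS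
      have hadj : G.Adj d.fst d.snd := d.adj
      have hbm : x d.fst k = m := hd1
      have hsm : m < x d.snd k := lt_of_le_of_ne (hminle d.snd) (fun h => hd2 h.symm)
      -- u at d.fst exceeds m
      have hfilter : (G.neighborFinset d.fst).filter (fun j => y j k = true)
          = G.neighborFinset d.fst := Finset.filter_true_of_mem (fun j _ => by simp [hy j])
      have hsnd : d.snd ∈ G.neighborFinset d.fst := by
        rw [SimpleGraph.mem_neighborFinset]; exact hadj
      have hne0 : (G.neighborFinset d.fst).Nonempty := ⟨d.snd, hsnd⟩
      have hcardpos : (0:ℝ) < (G.neighborFinset d.fst).card := by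
        exact_mod_cast Finset.card_pos.mpr hne0
      have hsum : (G.neighborFinset d.fst).card • m < ∑ j ∈ G.neighborFinset d.fst, x j k := by
        rw [← Finset.sum_const]
        exact Finset.sum_lt_sum (fun j _ => hminle j) ⟨d.snd, hsnd, hsm⟩
      have hub' : m < u d.fst k := by
        rw [hu, hfilter, dif_pos hne0, lt_div_iff₀ hcardpos]
        rw [nsmul_eq_mul] at hsum
        linarith
      have hstrict : x d.fst (k - 1) < x d.fst (k + 1) := by
        rw [hxdyn]
        calc x d.fst (k - 1) = m := by rw [← heq d.fst, hbm]
          _ < u d.fst k := hub'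
          _ ≤ max (x d.fst k) (u d.fst k) := le_max_right _ _
      exact Finset.sum_lt_sum
        (fun i _ => le_trans (hle i) (hmono i k))
        ⟨d.fst, Finset.mem_univ _, hstrict⟩
    · obtain ⟨i₁, hi₁⟩ := not_forall.mp heq
      have : x i₁ (k - 1) < x i₁ (k + 1) :=
        lt_of_lt_of_le (lt_of_le_of_ne (hle i₁) (fun h => hi₁ h.symm)) (hmono i₁ k)
      exact Finset.sum_lt_sum
        (fun i _ => le_trans (hle i) (hmono i k))
        ⟨i₁, Finset.mem_univ _, this⟩
end
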